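/- For every y ∈ ℝ, the propensity-weighted distributional moment identifies the complier contrast of potential-outcome subdistributions: E[H·1{Y ≤ y}] = P({Y1 ≤ y} ∩ C) − P({Y0 ≤ y} ∩ C). -/

import Mathlib

open MeasureTheory ProbabilityTheory

lemma aux_int {Ω : Type*} {m : MeasurableSpace Ω} [mΩ : MeasurableSpace Ω]
    (hm : m ≤ mΩ) (P : Measure Ω) [IsProbabilityMeasure P]
    {c g : Ω → ℝ} (hc : StronglyMeasurable[m] c) {Cb : ℝ} (hcb : ∀ ω, ‖c ω‖ ≤ Cb)
    {U T : Set Ω} (hU : MeasurableSet U) (hT : MeasurableSet T)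
    (hprod : (P[U.indicator (fun _ => (1:ℝ)) | m]) =ᵐ[P]
      fun ω => g ω * (P[T.indicator (fun _ => (1:ℝ)) | m]) ω)
    (hcg : ∀ ω, c ω * g ω = 1) :
    ∫ ω, c ω * U.indicator (fun _ => (1:ℝ)) ω ∂P = (P T).toReal := by
  haveI : SigmaFinite (P.trim hm) := inferInstance
  have hIU : Integrable (U.indicator fun _ => (1:ℝ)) P := (integrable_const 1).indicator hU
  have hIT : Integrable (T.indicator fun _ => (1:ℝ)) P := (integrable_const 1).indicator hT
  have hIcU : Integrable (c * U.indicator fun _ => (1:ℝ)) P :=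
    hIU.bdd_mul (hc.mono hm).aestronglyMeasurable (ae_of_all _ hcb)
  have h1 : (P[c * U.indicator fun _ => (1:ℝ) | m]) =ᵐ[P]
      (P[T.indicator (fun _ => (1:ℝ)) | m]) := by
    refine (condExp_mul_of_stronglyMeasurable_left hc hIcU hIU).trans ?_
    filter_upwards [hprod] with ω hω
    simp only [Pi.mul_apply, hω, ← mul_assoc, hcg ω, one_mul]
  calc ∫ ω, c ω * U.indicator (fun _ => (1:ℝ)) ω ∂P
      = ∫ ω, (P[c * U.indicator fun _ => (1:ℝ) | m]) ω ∂P := (integral_condExp hm).symm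
    _ = ∫ ω, (P[T.indicator (fun _ => (1:ℝ)) | m]) ω ∂P := integral_congr_ae h1
    _ = ∫ ω, T.indicator (fun _ => (1:ℝ)) ω ∂P := integral_condExp hm
    _ = (P T).toReal := integral_indicator_one hT

lemma main_aux {Ω : Type*} {m : MeasurableSpace Ω} [mΩ : MeasurableSpace Ω]
    [StandardBorelSpace Ω] (hm : m ≤ mΩ)
    (P : Measure Ω) [IsProbabilityMeasure P]
    (Z W0 W1 Y0 Y1 : Ω → ℝ)
    (hZ : Measurable Z) (hW0 : Measurable W0) (hW1 : Measurable W1)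
    (hY0 : Measurable Y0) (hY1 : Measurable Y1)
    (hZbin : ∀ ω, Z ω = 0 ∨ Z ω = 1)
    (hW0bin : ∀ ω, W0 ω = 0 ∨ W0 ω = 1)
    (hW1bin : ∀ ω, W1 ω = 0 ∨ W1 ω = 1)
    (W Y : Ω → ℝ)
    (hWdef : ∀ ω, W ω = Z ω * W1 ω + (1 - Z ω) * W0 ω)
    (hYdef : ∀ ω, Y ω = W ω * Y1 ω + (1 - W ω) * Y0 ω)
    (hcondindep : CondIndepFun m hm Z (fun ω => (Y0 ω, Y1 ω, W0 ω, W1 ω)) P)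
    (hmono : ∀ᵐ ω ∂P, W0 ω ≤ W1 ω)
    (ε : ℝ) (hε0 : 0 < ε) (hε12 : ε < 1 / 2)
    (p : Ω → ℝ) (hp : Measurable[m] p) (hpbd : ∀ ω, ε ≤ p ω ∧ p ω ≤ 1 - ε)
    (hpver : P[Z | m] =ᵐ[P] p)
    (H : Ω → ℝ) (hH : ∀ ω, H ω = (Z ω - p ω) / (p ω * (1 - p ω))) (y : ℝ) :
    ∫ ω, H ω * (if Y ω ≤ y then (1 : ℝ) else 0) ∂P
      = (P ({ω | Y1 ω ≤ y} ∩ {ω | W0 ω < W1 ω})).toReal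
        - (P ({ω | Y0 ω ≤ y} ∩ {ω | W0 ω < W1 ω})).toReal := by
  have hπpos : ∀ ω, 0 < p ω := fun ω => lt_of_lt_of_le hε0 (hpbd ω).1
  have h1πpos : ∀ ω, 0 < 1 - p ω := fun ω => by
    have := (hpbd ω).2; linarith
  set V : Ω → ℝ × ℝ × ℝ × ℝ := fun ω => (Y0 ω, Y1 ω, W0 ω, W1 ω) with hV_def
  have hV : Measurable V := (hY0.prodMk (hY1.prodMk (hW0.prodMk hW1)))
  set S : Set Ω := Z ⁻¹' {1} with hS_def
  have hSmeas : MeasurableSet S := hZ (measurableSet_singleton 1)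
  set B1 : Set (ℝ × ℝ × ℝ × ℝ) := {q | q.2.2.2 * q.2.1 + (1 - q.2.2.2) * q.1 ≤ y} with hB1_def
  set B0 : Set (ℝ × ℝ × ℝ × ℝ) := {q | q.2.2.1 * q.2.1 + (1 - q.2.2.1) * q.1 ≤ y} with hB0_def
  have hB1 : MeasurableSet B1 := by
    apply measurableSet_le _ measurable_const; fun_prop
  have hB0 : MeasurableSet B0 := by
    apply measurableSet_le _ measurable_const; fun_prop
  set T1 : Set Ω := V ⁻¹' B1 with hT1_def
  set T0 : Set Ω := V ⁻¹' B0 with hT0_def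
  have hT1 : MeasurableSet T1 := hV hB1
  have hT0 : MeasurableSet T0 := hV hB0
  have hT1mem : ∀ ω, ω ∈ T1 ↔ W1 ω * Y1 ω + (1 - W1 ω) * Y0 ω ≤ y := fun ω => Iff.rfl
  have hT0mem : ∀ ω, ω ∈ T0 ↔ W0 ω * Y1 ω + (1 - W0 ω) * Y0 ω ≤ y := fun ω => Iff.rfl
  -- conditional independence consequences
  have hCI := (condIndepFun_iff_condExp_inter_preimage_eq_mul hZ hV).mp hcondindep
  have hZS : Z = S.indicator fun _ => (1:ℝ) := by
    funext ω
    rcases hZbin ω with h | h <;> simp [hS_def, Set.indicator_apply, h]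
  have hSπ : (P[S.indicator (fun _ => (1:ℝ)) | m]) =ᵐ[P] p := by
    rw [show (S.indicator fun _ => (1:ℝ)) = Z from hZS.symm]; exact hpver
  have hCI1 : (P[(S ∩ T1).indicator (fun _ => (1:ℝ)) | m]) =ᵐ[P]
      fun ω => p ω * (P[T1.indicator (fun _ => (1:ℝ)) | m]) ω := by
    refine (hCI {1} B1 (measurableSet_singleton 1) hB1).trans ?_
    filter_upwards [hSπ] with ω hω
    rw [hω]
  have hCI0 : (P[(S ∩ T0).indicator (fun _ => (1:ℝ)) | m]) =ᵐ[P]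
      fun ω => p ω * (P[T0.indicator (fun _ => (1:ℝ)) | m]) ω := by
    refine (hCI {1} B0 (measurableSet_singleton 1) hB0).trans ?_
    filter_upwards [hSπ] with ω hω
    rw [hω]
  haveI : SigmaFinite (P.trim hm) := inferInstance
  have hIT0 : Integrable (T0.indicator fun _ => (1:ℝ)) P := (integrable_const 1).indicator hT0
  have hIST0 : Integrable ((S ∩ T0).indicator fun _ => (1:ℝ)) P :=
    (integrable_const 1).indicator (hSmeas.inter hT0)
  have hindsub : (Sᶜ ∩ T0).indicator (fun _ => (1:ℝ))
      = (T0.indicator fun _ => (1:ℝ)) - ((S ∩ T0).indicator fun _ => (1:ℝ)) := by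
    funext ω
    by_cases hs : ω ∈ S <;> by_cases ht : ω ∈ T0 <;>
      simp [Set.indicator_apply, hs, ht]
  have hprod0 : (P[(Sᶜ ∩ T0).indicator (fun _ => (1:ℝ)) | m]) =ᵐ[P]
      fun ω => (1 - p ω) * (P[T0.indicator (fun _ => (1:ℝ)) | m]) ω := by
    rw [hindsub]
    refine (condExp_sub hIT0 hIST0 _).trans ?_
    filter_upwards [hCI0] with ω hω
    simp only [Pi.sub_apply, hω]
    ring
  -- the weight functions
  set c1 : Ω → ℝ := fun ω => (p ω)⁻¹ with hc1_def
  set c0 : Ω → ℝ := fun ω => (1 - p ω)⁻¹ with hc0_def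
  have hc1m : StronglyMeasurable[m] c1 := (hp.inv).stronglyMeasurable
  have hc0m : StronglyMeasurable[m] c0 := ((measurable_const.sub hp).inv).stronglyMeasurable
  have hbd1 : ∀ ω, ‖c1 ω‖ ≤ ε⁻¹ := by
    intro ω
    rw [Real.norm_eq_abs, abs_of_pos (inv_pos.mpr (hπpos ω))]
    exact inv_anti₀ hε0 (hpbd ω).1
  have hbd0 : ∀ ω, ‖c0 ω‖ ≤ ε⁻¹ := by
    intro ω
    rw [Real.norm_eq_abs, abs_of_pos (inv_pos.mpr (h1πpos ω))]
    refine inv_anti₀ hε0 ?_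
    have := (hpbd ω).2; linarith
  have hcg1 : ∀ ω, c1 ω * p ω = 1 := fun ω => inv_mul_cancel₀ (ne_of_gt (hπpos ω))
  have hcg0 : ∀ ω, c0 ω * (1 - p ω) = 1 := fun ω => inv_mul_cancel₀ (ne_of_gt (h1πpos ω))
  have key1 := aux_int hm P hc1m hbd1 (hSmeas.inter hT1) hT1 hCI1 hcg1
  have key0 := aux_int hm P hc0m hbd0 (hSmeas.compl.inter hT0) hT0 hprod0 hcg0
  have hIcU1 : Integrable (c1 * (S ∩ T1).indicator fun _ => (1:ℝ)) P :=
    ((integrable_const 1).indicator (hSmeas.inter hT1)).bdd_mul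
      (hc1m.mono hm).aestronglyMeasurable (ae_of_all _ hbd1)
  have hIcU0 : Integrable (c0 * (Sᶜ ∩ T0).indicator fun _ => (1:ℝ)) P :=
    ((integrable_const 1).indicator (hSmeas.compl.inter hT0)).bdd_mul
      (hc0m.mono hm).aestronglyMeasurable (ae_of_all _ hbd0)
  -- pointwise decomposition of the integrand
  have hptw : ∀ ω, H ω * (if Y ω ≤ y then (1:ℝ) else 0)
      = c1 ω * (S ∩ T1).indicator (fun _ => (1:ℝ)) ω
        - c0 ω * (Sᶜ ∩ T0).indicator (fun _ => (1:ℝ)) ω := by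
    intro ω
    have hπ0 : p ω ≠ 0 := ne_of_gt (hπpos ω)
    have hπ1 : 1 - p ω ≠ 0 := ne_of_gt (h1πpos ω)
    rcases hZbin ω with h | h
    · have hnS : ω ∉ S := by simp [hS_def, h]
      have hY : Y ω = W0 ω * Y1 ω + (1 - W0 ω) * Y0 ω := by
        rw [hYdef, hWdef, h]; ring
      by_cases hle : W0 ω * Y1 ω + (1 - W0 ω) * Y0 ω ≤ y
      · rw [hH, h, hY, if_pos hle,
          Set.indicator_of_notMem (fun hmem => hnS hmem.1),
          Set.indicator_of_mem (Set.mem_inter (Set.mem_compl hnS) ((hT0mem ω).mpr hle))]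
        simp only [hc1_def, hc0_def]
        field_simp
        ring
      · rw [hH, h, hY, if_neg hle,
          Set.indicator_of_notMem (fun hmem => hnS hmem.1),
          Set.indicator_of_notMem (fun hmem => hle ((hT0mem ω).mp hmem.2))]
        ring
    · have hSmem : ω ∈ S := by simp [hS_def, h]
      have hY : Y ω = W1 ω * Y1 ω + (1 - W1 ω) * Y0 ω := by
        rw [hYdef, hWdef, h]; ring
      by_cases hle : W1 ω * Y1 ω + (1 - W1 ω) * Y0 ω ≤ y
      · rw [hH, h, hY, if_pos hle,
          Set.indicator_of_mem (Set.mem_inter hSmem ((hT1mem ω).mpr hle)),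
          Set.indicator_of_notMem (fun hmem => hmem.1 hSmem)]
        simp only [hc1_def, hc0_def]
        field_simp
        ring
      · rw [hH, h, hY, if_neg hle,
          Set.indicator_of_notMem (fun hmem => hle ((hT1mem ω).mp hmem.2)),
          Set.indicator_of_notMem (fun hmem => hmem.1 hSmem)]
        ring
  have hmain : ∫ ω, H ω * (if Y ω ≤ y then (1:ℝ) else 0) ∂P
      = (P T1).toReal - (P T0).toReal := by
    calc ∫ ω, H ω * (if Y ω ≤ y then (1:ℝ) else 0) ∂P
        = ∫ ω, (c1 ω * (S ∩ T1).indicator (fun _ => (1:ℝ)) ω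
            - c0 ω * (Sᶜ ∩ T0).indicator (fun _ => (1:ℝ)) ω) ∂P :=
          integral_congr_ae (Filter.Eventually.of_forall hptw)
      _ = (∫ ω, c1 ω * (S ∩ T1).indicator (fun _ => (1:ℝ)) ω ∂P)
            - ∫ ω, c0 ω * (Sᶜ ∩ T0).indicator (fun _ => (1:ℝ)) ω ∂P :=
          integral_sub hIcU1 hIcU0
      _ = (P T1).toReal - (P T0).toReal := by rw [key1, key0]
  -- complier decomposition
  set C : Set Ω := {ω | W0 ω < W1 ω} with hC_def
  have hC : MeasurableSet C := measurableSet_lt hW0 hW1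
  have hcompl : ∀ ω, W0 ω < W1 ω → W1 ω = 1 ∧ W0 ω = 0 := by
    intro ω h
    rcases hW0bin ω with a | a <;> rcases hW1bin ω with b | b <;>
      constructor <;> linarith
  have e1 : T1 ∩ C = {ω | Y1 ω ≤ y} ∩ C := by
    ext ω
    simp only [Set.mem_inter_iff, Set.mem_setOf_eq, hT1mem, hC_def]
    constructor
    · rintro ⟨h1, h2⟩
      obtain ⟨b, a⟩ := hcompl ω h2
      rw [b] at h1
      exact ⟨by linarith, h2⟩
    · rintro ⟨h1, h2⟩
      obtain ⟨b, a⟩ := hcompl ω h2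
      refine ⟨?_, h2⟩
      rw [b]; linarith
  have e0 : T0 ∩ C = {ω | Y0 ω ≤ y} ∩ C := by
    ext ω
    simp only [Set.mem_inter_iff, Set.mem_setOf_eq, hT0mem, hC_def]
    constructor
    · rintro ⟨h1, h2⟩
      obtain ⟨b, a⟩ := hcompl ω h2
      rw [a] at h1
      exact ⟨by linarith, h2⟩
    · rintro ⟨h1, h2⟩
      obtain ⟨b, a⟩ := hcompl ω h2
      refine ⟨?_, h2⟩
      rw [a]; linarith
  have eC : P (T1 \ C) = P (T0 \ C) := by
    apply measure_congr
    rw [Filter.eventuallyEq_set]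
    filter_upwards [hmono] with ω hω
    simp only [Set.mem_diff, hT1mem, hT0mem, hC_def, Set.mem_setOf_eq]
    constructor
    · rintro ⟨h1, h2⟩
      have heq : W0 ω = W1 ω := le_antisymm hω (not_lt.mp h2)
      exact ⟨by rw [heq]; exact h1, h2⟩
    · rintro ⟨h1, h2⟩
      have heq : W0 ω = W1 ω := le_antisymm hω (not_lt.mp h2)
      exact ⟨by rw [← heq]; exact h1, h2⟩
  have d1 : P T1 = P ({ω | Y1 ω ≤ y} ∩ C) + P (T1 \ C) := by
    rw [← e1, measure_inter_add_diff T1 hC]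
  have d0 : P T0 = P ({ω | Y0 ω ≤ y} ∩ C) + P (T0 \ C) := by
    rw [← e0, measure_inter_add_diff T0 hC]
  rw [hmain, d1, d0, ENNReal.toReal_add (measure_ne_top _ _) (measure_ne_top _ _),
    ENNReal.toReal_add (measure_ne_top _ _) (measure_ne_top _ _), eC]
  ring

/-- The propensity-weighted distributional moment identifies the complier contrast of
potential-outcome subdistributions:
`E[H·1{Y ≤ y}] = P({Y1 ≤ y} ∩ C) − P({Y0 ≤ y} ∩ C)`. -/
theorem weighted_distributional_moment_identifies_complier_contrast
    {Ω : Type*} [MeasurableSpace Ω] [StandardBorelSpace Ω] {d : ℕ}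
    (P : Measure Ω) [IsProbabilityMeasure P]
    (X : Ω → (Fin d → ℝ)) (hX : Measurable X)
    (Z W0 W1 Y0 Y1 : Ω → ℝ)
    (hZ : Measurable Z) (hW0 : Measurable W0) (hW1 : Measurable W1)
    (hY0 : Measurable Y0) (hY1 : Measurable Y1)
    (hZbin : ∀ ω, Z ω = 0 ∨ Z ω = 1)
    (hW0bin : ∀ ω, W0 ω = 0 ∨ W0 ω = 1)
    (hW1bin : ∀ ω, W1 ω = 0 ∨ W1 ω = 1)
    (W Y : Ω → ℝ)
    (hWdef : ∀ ω, W ω = Z ω * W1 ω + (1 - Z ω) * W0 ω)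
    (hYdef : ∀ ω, Y ω = W ω * Y1 ω + (1 - W ω) * Y0 ω)
    (hcondindep : CondIndepFun (MeasurableSpace.comap X inferInstance) hX.comap_le
      Z (fun ω => (Y0 ω, Y1 ω, W0 ω, W1 ω)) P)
    (hmono : ∀ᵐ ω ∂P, W0 ω ≤ W1 ω)
    (ε : ℝ) (hε : 0 < ε ∧ ε < 1 / 2)
    (π : (Fin d → ℝ) → ℝ) (hπ : Measurable π) (hπbd : ∀ x, ε ≤ π x ∧ π x ≤ 1 - ε)
    (hπver : P[Z | MeasurableSpace.comap X inferInstance] =ᵐ[P] fun ω => π (X ω))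
    (H : Ω → ℝ) (hH : ∀ ω, H ω = (Z ω - π (X ω)) / (π (X ω) * (1 - π (X ω)))) :
    ∀ y : ℝ,
      ∫ ω, H ω * (if Y ω ≤ y then (1 : ℝ) else 0) ∂P
        = (P ({ω | Y1 ω ≤ y} ∩ {ω | W0 ω < W1 ω})).toReal
          - (P ({ω | Y0 ω ≤ y} ∩ {ω | W0 ω < W1 ω})).toReal := by
  intro y
  exact main_aux hX.comap_le P Z W0 W1 Y0 Y1 hZ hW0 hW1 hY0 hY1 hZbin hW0bin hW1bin
    W Y hWdef hYdef hcondindep hmono ε hε.1 hε.2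
    (fun ω => π (X ω)) (hπ.comp (Measurable.of_comap_le le_rfl))
    (fun ω => hπbd (X ω)) hπver H hH y
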